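/- Let H be a Hilbert space, a > 0, and suppose (q_n) is a sequence of bounded measurable functions on 𝕋², uniformly bounded in L∞, converging pointwise a.e. to q ∈ L∞. Let T_{q_n}u = (1+B²)u + B𝑃(q_n u^⊥) on the space H of divergence-free L² vector fields. Then for every u ∈ H, T_{q_n}^{-1}u converges strongly in L² to T_q^{-1}u. -/

import Mathlib

open MeasureTheory Filter Topology
open scoped ENNReal NNReal

/-- The 2-torus. -/
abbrev T2 := AddCircle (1 : ℝ) × AddCircle (1 : ℝ)

/-- L² vector fields on the torus. -/
noncomputable abbrev V2 := Lp (EuclideanSpace ℝ (Fin 2)) 2 (volume : Measure T2)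

/-- Pointwise rotation `v ↦ v^⊥ = (-v₂, v₁)`. -/
noncomputable def perp : EuclideanSpace ℝ (Fin 2) →L[ℝ] EuclideanSpace ℝ (Fin 2) :=
  LinearMap.toContinuousLinearMap
    { toFun := fun v => (WithLp.toLp 2 ![-(v 1), v 0] : EuclideanSpace ℝ (Fin 2))
      map_add' := by
        intro u v
        ext i
        fin_cases i <;>
          simp [Matrix.cons_val_zero, Matrix.cons_val_one, Matrix.head_cons] <;> ring
      map_smul' := by
        intro c v
        ext i
        fin_cases i <;>
          simp [Matrix.cons_val_zero, Matrix.cons_val_one, Matrix.head_cons] }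

/-- `u ↦ u^⊥` on L² vector fields. -/
noncomputable def perpL : V2 →L[ℝ] V2 := perp.compLpL 2 volume

lemma aux_tendsto (qn : ℕ → T2 → ℝ) (q : T2 → ℝ) (M : ℝ)
    (hqn_meas : ∀ n, AEStronglyMeasurable (qn n) volume)
    (hq_meas : AEStronglyMeasurable q volume)
    (hqn_bdd : ∀ n, ∀ᵐ x ∂(volume : Measure T2), |qn n x| ≤ M)
    (hq_bdd : ∀ᵐ x ∂(volume : Measure T2), |q x| ≤ M)
    (hae : ∀ᵐ x ∂(volume : Measure T2), Tendsto (fun n => qn n x) atTop (nhds (q x)))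
    (v : V2) :
    Tendsto (fun n => eLpNorm
      (fun x => (qn n x - q x) • (v : T2 → EuclideanSpace ℝ (Fin 2)) x) 2 volume)
      atTop (𝓝 0) := by
  set w : T2 → EuclideanSpace ℝ (Fin 2) := (v : T2 → EuclideanSpace ℝ (Fin 2)) with hw
  have hwmeas : AEStronglyMeasurable w volume := Lp.aestronglyMeasurable v
  set C : ℝ≥0 := (2 * M).toNNReal with hC
  have hlint : Tendsto
      (fun n => ∫⁻ x, (‖(qn n x - q x) • w x‖₊ : ℝ≥0∞) ^ (2 : ℝ) ∂volume) atTop (𝓝 0) := by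
    have hFmeas : ∀ n, AEMeasurable
        (fun x => (‖(qn n x - q x) • w x‖₊ : ℝ≥0∞) ^ (2 : ℝ)) volume := fun n =>
      ((((hqn_meas n).sub hq_meas).smul hwmeas).enorm).pow_const _
    have h_bound : ∀ n, (fun x => (‖(qn n x - q x) • w x‖₊ : ℝ≥0∞) ^ (2 : ℝ)) ≤ᵐ[volume]
        fun x => ((C : ℝ≥0∞) * (‖w x‖₊ : ℝ≥0∞)) ^ (2 : ℝ) := by
      intro n
      filter_upwards [hqn_bdd n, hq_bdd] with x h1 h2
      refine ENNReal.rpow_le_rpow ?_ (by norm_num)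
      rw [nnnorm_smul, ENNReal.coe_mul]
      gcongr
      rw [← ENNReal.coe_le_coe] at *
      rw [ENNReal.coe_le_coe, ← NNReal.coe_le_coe]
      have : ‖qn n x - q x‖ ≤ 2 * M := by
        calc ‖qn n x - q x‖ ≤ |qn n x| + |q x| := abs_sub _ _
        _ ≤ 2 * M := by linarith
      calc (‖qn n x - q x‖₊ : ℝ) = ‖qn n x - q x‖ := rfl
      _ ≤ 2 * M := this
      _ ≤ ((2 * M).toNNReal : ℝ) := Real.le_coe_toNNReal _
    have h_fin : (∫⁻ x, ((C : ℝ≥0∞) * (‖w x‖₊ : ℝ≥0∞)) ^ (2 : ℝ) ∂volume) ≠ ⊤ := by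
      have hv2 : (∫⁻ x, (‖w x‖₊ : ℝ≥0∞) ^ ((2 : ℝ≥0∞).toReal) ∂volume) < ⊤ :=
        lintegral_rpow_enorm_lt_top_of_eLpNorm_lt_top two_ne_zero (ENNReal.ofNat_ne_top (n := 2))
          (Lp.eLpNorm_lt_top v)
      have : (∫⁻ x, ((C : ℝ≥0∞) * (‖w x‖₊ : ℝ≥0∞)) ^ (2 : ℝ) ∂volume)
          = (C : ℝ≥0∞) ^ (2 : ℝ) * ∫⁻ x, (‖w x‖₊ : ℝ≥0∞) ^ (2 : ℝ) ∂volume := by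
        rw [← lintegral_const_mul'' _ (f := fun x => (‖w x‖₊ : ℝ≥0∞) ^ (2 : ℝ)) (hwmeas.enorm.pow_const _)]
        congr 1
        funext x
        rw [ENNReal.mul_rpow_of_nonneg _ _ (by norm_num)]
      rw [this]
      refine ENNReal.mul_ne_top (by simp) ?_
      simpa using hv2.ne
    have h_lim : ∀ᵐ x ∂(volume : Measure T2),
        Tendsto (fun n => (‖(qn n x - q x) • w x‖₊ : ℝ≥0∞) ^ (2 : ℝ)) atTop (𝓝 0) := by
      filter_upwards [hae] with x hx
      have h1 : Tendsto (fun n => (qn n x - q x) • w x) atTop (𝓝 (0 : EuclideanSpace ℝ (Fin 2))) := by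
        have h0 : Tendsto (fun n => qn n x - q x) atTop (𝓝 (q x - q x)) :=
          hx.sub tendsto_const_nhds
        have := h0.smul (tendsto_const_nhds (x := w x))
        simpa using this
      have h2 : Tendsto (fun n => (‖(qn n x - q x) • w x‖₊ : ℝ≥0∞)) atTop (𝓝 0) := by
        rw [← ENNReal.coe_zero]
        exact ENNReal.tendsto_coe.mpr (by simpa using h1.nnnorm)
      have := (ENNReal.continuous_rpow_const (y := (2:ℝ))).continuousAt.tendsto.comp h2
      simpa [Function.comp_def, ENNReal.zero_rpow_of_pos] using this
    simpa using tendsto_lintegral_of_dominated_convergence' _ hFmeas h_bound h_fin h_lim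
  have heq : ∀ n, eLpNorm (fun x => (qn n x - q x) • w x) 2 volume
      = (∫⁻ x, (‖(qn n x - q x) • w x‖₊ : ℝ≥0∞) ^ (2 : ℝ) ∂volume) ^ (1 / (2:ℝ)) := by
    intro n
    rw [eLpNorm_eq_lintegral_rpow_enorm_toReal two_ne_zero (ENNReal.ofNat_ne_top (n := 2))]
    norm_num
    rfl
  simp only [heq]
  have := (ENNReal.continuous_rpow_const (y := (1/2:ℝ))).continuousAt.tendsto.comp hlint
  simpa [Function.comp_def, ENNReal.zero_rpow_of_pos] using this

set_option maxHeartbeats 2000000 in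
/-- if `(q_n)` is uniformly bounded in `L∞` and converges a.e. to `q`,
and `T_p u = (1+B²) u + B 𝑃(p u^⊥)` (with `𝑃` the Leray projector), then for every `u`,
`T_{q_n}⁻¹ u → T_q⁻¹ u` strongly in `L²`. -/
theorem stmt3 (B : ℝ) (hB : 0 ≤ B)
    (P : V2 →L[ℝ] V2) (hPnorm : ‖P‖ ≤ 1)   -- the Leray projector
    (mul : (T2 → ℝ) → V2 →L[ℝ] V2)          -- multiplication by a bounded function
    (hmul : ∀ (p : T2 → ℝ) (u : V2),
      (mul p u : T2 → EuclideanSpace ℝ (Fin 2)) =ᵐ[volume]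
        fun x => p x • (u : T2 → EuclideanSpace ℝ (Fin 2)) x)
    (qn : ℕ → T2 → ℝ) (q : T2 → ℝ) (M : ℝ)
    (hqn_meas : ∀ n, AEStronglyMeasurable (qn n) volume)
    (hq_meas : AEStronglyMeasurable q volume)
    (hqn_bdd : ∀ n, ∀ᵐ x ∂(volume : Measure T2), |qn n x| ≤ M)
    (hq_bdd : ∀ᵐ x ∂(volume : Measure T2), |q x| ≤ M)
    (hae : ∀ᵐ x ∂(volume : Measure T2), Tendsto (fun n => qn n x) atTop (nhds (q x)))
    -- the operators T_p = (1+B²)•I + B•𝑃 ∘ (multiplication by p) ∘ ⊥ :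
    (Top : (T2 → ℝ) → V2 →L[ℝ] V2)
    (hTop : ∀ p : T2 → ℝ, Top p
      = (1 + B ^ 2) • (1 : V2 →L[ℝ] V2) + B • (P.comp ((mul p).comp perpL)))
    -- the inverses, with the norm bound `‖T_p⁻¹‖ ≤ (1+B²)⁻¹` :
    (S : ℕ → V2 →L[ℝ] V2) (Sinf : V2 →L[ℝ] V2)
    (hSl : ∀ n, S n * Top (qn n) = 1) (hSr : ∀ n, Top (qn n) * S n = 1)
    (hSinfl : Sinf * Top q = 1) (hSinfr : Top q * Sinf = 1)
    (hSnorm : ∀ n, ‖S n‖ ≤ (1 + B ^ 2)⁻¹) (hSinfnorm : ‖Sinf‖ ≤ (1 + B ^ 2)⁻¹) :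
    ∀ u : V2, Tendsto (fun n => S n u) atTop (nhds (Sinf u)) := by
  intro u
  set v : V2 := perpL (Sinf u) with hv
  -- Step 1: mul (qn n) v → mul q v in L²
  have h2 : Tendsto (fun n => (mul (qn n) v : V2)) atTop (𝓝 (mul q v)) := by
    rw [Lp.tendsto_Lp_iff_tendsto_eLpNorm']
    have heq : (fun n => eLpNorm (⇑(mul (qn n) v) - ⇑(mul q v)) 2 volume)
        = fun n => eLpNorm
          (fun x => (qn n x - q x) • (v : T2 → EuclideanSpace ℝ (Fin 2)) x) 2 volume := by
      funext n
      apply eLpNorm_congr_ae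
      filter_upwards [hmul (qn n) v, hmul q v] with x h1 h2
      simp only [Pi.sub_apply, h1, h2, sub_smul]
    rw [heq]
    exact aux_tendsto qn q M hqn_meas hq_meas hqn_bdd hq_bdd hae v
  have hg : Tendsto (fun n => ‖(mul q v : V2) - mul (qn n) v‖) atTop (𝓝 0) := by
    have := tendsto_iff_norm_sub_tendsto_zero.mp h2
    simpa [norm_sub_rev] using this
  -- Step 2: the identity
  have hid : ∀ n, S n u - Sinf u
      = S n (B • (P ((mul q v : V2) - mul (qn n) v))) := by
    intro n
    have h1 : Top q (Sinf u) = u := by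
      have := congrArg (fun T : V2 →L[ℝ] V2 => T u) hSinfr
      simpa [ContinuousLinearMap.mul_apply] using this
    have h2' : S n (Top (qn n) (Sinf u)) = Sinf u := by
      have := congrArg (fun T : V2 →L[ℝ] V2 => T (Sinf u)) (hSl n)
      simpa [ContinuousLinearMap.mul_apply] using this
    have happ : ∀ p : T2 → ℝ, Top p (Sinf u)
        = (1 + B ^ 2) • Sinf u + B • P (mul p v) := by
      intro p
      rw [hTop p]
      simp [ContinuousLinearMap.add_apply, ContinuousLinearMap.smul_apply,
        ContinuousLinearMap.comp_apply, hv]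
    calc S n u - Sinf u = S n (Top q (Sinf u)) - S n (Top (qn n) (Sinf u)) := by
          rw [h1, h2']
      _ = S n (Top q (Sinf u) - Top (qn n) (Sinf u)) := by rw [map_sub]
      _ = S n (B • (P ((mul q v : V2) - mul (qn n) v))) := by
          congr 1
          rw [happ q, happ (qn n), map_sub, smul_sub]
          abel
  -- Step 3: squeeze
  rw [tendsto_iff_norm_sub_tendsto_zero]
  have hb : ∀ n, ‖S n u - Sinf u‖
      ≤ (1 + B ^ 2)⁻¹ * (B * ‖(mul q v : V2) - mul (qn n) v‖) := by
    intro n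
    rw [hid n]
    calc ‖S n (B • (P ((mul q v : V2) - mul (qn n) v)))‖
        ≤ ‖S n‖ * ‖B • (P ((mul q v : V2) - mul (qn n) v))‖ :=
          (S n).le_opNorm _
      _ ≤ (1 + B ^ 2)⁻¹ * (B * ‖(mul q v : V2) - mul (qn n) v‖) := by
          rw [norm_smul, Real.norm_eq_abs, abs_of_nonneg hB]
          refine mul_le_mul (hSnorm n) ?_ (by positivity) (by positivity)
          refine mul_le_mul_of_nonneg_left ?_ hB
          calc ‖P ((mul q v : V2) - mul (qn n) v)‖
              ≤ ‖P‖ * ‖(mul q v : V2) - mul (qn n) v‖ := P.le_opNorm _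
            _ ≤ 1 * ‖(mul q v : V2) - mul (qn n) v‖ :=
                mul_le_mul_of_nonneg_right hPnorm (norm_nonneg _)
            _ = ‖(mul q v : V2) - mul (qn n) v‖ := one_mul _
  have hlim : Tendsto (fun n => (1 + B ^ 2)⁻¹ * (B * ‖(mul q v : V2) - mul (qn n) v‖))
      atTop (𝓝 0) := by
    have := (hg.const_mul B).const_mul ((1 + B ^ 2)⁻¹)
    simpa using this
  exact squeeze_zero (fun n => norm_nonneg _) hb hlim
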